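/- Let q be an integral quadratic form of signature (1,n) on a lattice L with n ≥ 2, and suppose L contains a nonzero isotropic vector. Then L contains infinitely many primitive isotropic vectors, lying on infinitely many distinct isotropic lines. -/

import Mathlib

lemma exists_primitive_part (L : Type*) [AddCommGroup L] [Module ℤ L]
    [Module.Free ℤ L] [Module.Finite ℤ L] (z : L) (hz : z ≠ 0) :
    ∃ (p : L) (dd : ℤ), dd ≠ 0 ∧ z = dd • p ∧ ∀ (w : L) (m : ℤ), p = m • w → IsUnit m := by
  classical
  let b := Module.Free.chooseBasis ℤ L
  set f : Module.Free.ChooseBasisIndex ℤ L → ℤ := fun i => b.repr z i with hf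
  set g : ℤ := Finset.univ.gcd f with hg
  have hgdvd : ∀ i, g ∣ f i := fun i => Finset.gcd_dvd (Finset.mem_univ i)
  have hgne : g ≠ 0 := by
    intro h0
    apply hz
    have hall : ∀ i, f i = 0 := fun i => zero_dvd_iff.mp (h0 ▸ hgdvd i)
    have hrz : b.repr z = b.repr 0 := by
      ext i; simpa using hall i
    exact b.repr.injective hrz
  have hzsmul : ∀ (m : ℤ) (y : L) (i), b.repr (m • y) i = m * b.repr y i := by
    intro m y i
    simp only [← Int.cast_smul_eq_zsmul ℤ, map_smul, Finsupp.smul_apply,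
      smul_eq_mul, Int.cast_id]
    simp
  set p : L := ∑ j, (f j / g) • b j with hp
  have hrep : ∀ i, b.repr p i = f i / g := by
    intro i
    rw [hp]
    simp only [← Int.cast_smul_eq_zsmul ℤ, Int.cast_id]
    exact congrFun (b.repr_sum_self _) i
  refine ⟨p, g, hgne, ?_, ?_⟩
  · apply b.repr.injective
    ext i
    rw [hzsmul, hrep, Int.mul_ediv_cancel' (hgdvd i)]
  · intro w m hpw
    have hdvd : m * g ∣ g := by
      apply Finset.dvd_gcd
      intro i _
      have h3 : f i / g = m * b.repr w i := by rw [← hrep i, hpw, hzsmul]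
      have h4 : f i = g * (f i / g) := (Int.mul_ediv_cancel' (hgdvd i)).symm
      exact ⟨b.repr w i, by rw [h4, h3]; ring⟩
    exact isUnit_of_dvd_one ((mul_dvd_mul_iff_right hgne).mp (by rwa [one_mul] : m * g ∣ 1 * g))

/-- a lattice of signature (1,n), n ≥ 2, containing a nonzero isotropic
vector contains infinitely many primitive isotropic vectors, lying on infinitely many
distinct isotropic lines. -/
theorem infinitely_many_isotropic_lines (n : ℕ) (hn : 2 ≤ n)
    (L : Type*) [AddCommGroup L] [Module ℤ L] [Module.Free ℤ L] [Module.Finite ℤ L]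
    (B : L →ₗ[ℤ] L →ₗ[ℤ] ℤ) (hsymm : ∀ x y, B x y = B y x)
    (ι : L →ₗ[ℤ] (Fin (n+1) → ℝ)) (hinj : Function.Injective ι)
    (hspan : Submodule.span ℝ (Set.range ι) = ⊤)
    (hcompat : ∀ x y : L, (B x y : ℝ) =
      ι x 0 * ι y 0 - ∑ i : Fin n, ι x i.succ * ι y i.succ)
    (hiso : ∃ v : L, v ≠ 0 ∧ B v v = 0) :
    {v : L | B v v = 0 ∧ ∀ (w : L) (m : ℤ), v = m • w → IsUnit m}.Infinite ∧
    {ℓ : Submodule ℤ L | ∃ v : L, v ≠ 0 ∧ B v v = 0 ∧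
      ℓ = Submodule.span ℤ {v}}.Infinite := by
  classical
  obtain ⟨v, hv0, hviso⟩ := hiso
  have hιv : ι v ≠ 0 := fun h => hv0 (hinj (by rw [h, map_zero]))
  -- nondegeneracy at v
  have hwex : ∃ w, B v w ≠ 0 := by
    by_contra hcon
    push_neg at hcon
    apply hιv
    have hP : ∀ u : Fin (n+1) → ℝ,
        ι v 0 * u 0 - ∑ i : Fin n, ι v i.succ * u i.succ = 0 := by
      intro u
      have hu : u ∈ Submodule.span ℝ (Set.range ι) := by rw [hspan]; trivial
      induction hu using Submodule.span_induction with
      | mem y hy =>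
        obtain ⟨t, rfl⟩ := hy
        rw [← hcompat v t, hcon t, Int.cast_zero]
      | zero => simp
      | add y z _ _ hy hz =>
        simp only [Pi.add_apply, mul_add, Finset.sum_add_distrib] at *
        linarith
      | smul r y _ hy =>
        simp only [Pi.smul_apply, smul_eq_mul]
        have hsum : ∑ i : Fin n, ι v i.succ * (r * y i.succ)
            = r * ∑ i : Fin n, ι v i.succ * y i.succ := by
          rw [Finset.mul_sum]; exact Finset.sum_congr rfl (fun i _ => by ring)
        rw [hsum]; linear_combination r * hy
    funext j
    rcases Fin.eq_zero_or_eq_succ j with rfl | ⟨i, rfl⟩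
    · have h0 := hP ((Pi.single 0 1 : Fin (n+1) → ℝ))
      have h00 : ((Pi.single 0 1 : Fin (n+1) → ℝ)) 0 = 1 := by simp
      have hz' : ∀ i : Fin n, ((Pi.single 0 1 : Fin (n+1) → ℝ)) i.succ = 0 :=
        fun i => Pi.single_eq_of_ne (Fin.succ_ne_zero i) 1
      rw [h00, mul_one, Finset.sum_congr rfl (fun i _ => by rw [hz' i, mul_zero]),
        Finset.sum_const_zero, sub_zero] at h0
      simpa using h0
    · have h0 := hP ((Pi.single i.succ 1 : Fin (n+1) → ℝ))
      have hz0 : ((Pi.single i.succ 1 : Fin (n+1) → ℝ)) 0 = 0 :=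
        Pi.single_eq_of_ne (Ne.symm (Fin.succ_ne_zero i)) 1
      rw [hz0, mul_zero, zero_sub, neg_eq_zero] at h0
      have hss : ∀ j' : Fin n, ((Pi.single i.succ 1 : Fin (n+1) → ℝ)) j'.succ = if j' = i then 1 else 0 := by
        intro j'
        by_cases hji : j' = i
        · subst hji; simp
        · rw [Pi.single_eq_of_ne (fun hc => hji (Fin.succ_injective n hc)) 1, if_neg hji]
      rw [Finset.sum_congr rfl (fun j' _ => by rw [hss j'])] at h0
      simp only [mul_ite, mul_one, mul_zero, Finset.sum_ite_eq', Finset.mem_univ,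
        if_true] at h0
      simpa using h0
  obtain ⟨w, hb⟩ := hwex
  -- a third independent direction
  have hxex : ∃ x : L, ι x ∉ Submodule.span ℝ {ι v, ι w} := by
    by_contra hcon
    push_neg at hcon
    have hle : Submodule.span ℝ (Set.range ι) ≤ Submodule.span ℝ {ι v, ι w} :=
      Submodule.span_le.mpr (by rintro _ ⟨t, rfl⟩; exact hcon t)
    rw [hspan] at hle
    have htop : Submodule.span ℝ ({ι v, ι w} : Set (Fin (n+1) → ℝ)) = ⊤ := top_unique hle
    have h1 : Module.finrank ℝ (Fin (n+1) → ℝ) ≤ 2 := by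
      have h2 := finrank_span_le_card (R := ℝ) ({ι v, ι w} : Set (Fin (n+1) → ℝ))
      have h3 : ({ι v, ι w} : Set (Fin (n+1) → ℝ)).toFinset.card ≤ 2 := by
        rw [Set.toFinset_insert, Set.toFinset_singleton]
        exact (Finset.card_insert_le _ _).trans (by simp)
      rw [htop] at h2
      calc Module.finrank ℝ (Fin (n+1) → ℝ)
          = Module.finrank ℝ (⊤ : Submodule ℝ (Fin (n+1) → ℝ)) := (finrank_top _ _).symm
        _ ≤ 2 := le_trans h2 h3
    have h4 : Module.finrank ℝ (Fin (n+1) → ℝ) = n + 1 := by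
      simp [Module.finrank_pi]
    omega
  obtain ⟨x, hx⟩ := hxex
  -- real linear independence of ι v, ι w, ι x
  have hindR : ∀ α β γ : ℝ, α • ι v + β • ι w + γ • ι x = 0 → α = 0 ∧ β = 0 ∧ γ = 0 := by
    intro α β γ hrel
    have hγ : γ = 0 := by
      by_contra hγ
      apply hx
      have hxe : ι x = (γ⁻¹ * -α) • ι v + (γ⁻¹ * -β) • ι w := by
        have h1 : γ • ι x = (-α) • ι v + (-β) • ι w := by
          linear_combination (norm := module) hrel
        calc ι x = γ⁻¹ • (γ • ι x) := by rw [smul_smul, inv_mul_cancel₀ hγ, one_smul]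
          _ = (γ⁻¹ * -α) • ι v + (γ⁻¹ * -β) • ι w := by
              rw [h1, smul_add, smul_smul, smul_smul]
      rw [hxe]
      exact Submodule.add_mem _
        (Submodule.smul_mem _ _ (Submodule.subset_span (Set.mem_insert _ _)))
        (Submodule.smul_mem _ _ (Submodule.subset_span (Set.mem_insert_of_mem _ rfl)))
    subst hγ
    rw [zero_smul, add_zero] at hrel
    have hβ : β = 0 := by
      by_contra hβ
      apply hb
      have hwe : ι w = (β⁻¹ * -α) • ι v := by
        have h1 : β • ι w = (-α) • ι v := by
          linear_combination (norm := module) hrel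
        calc ι w = β⁻¹ • (β • ι w) := by rw [smul_smul, inv_mul_cancel₀ hβ, one_smul]
          _ = (β⁻¹ * -α) • ι v := by rw [h1, smul_smul]
      have hcast : (B v w : ℝ) = (β⁻¹ * -α) * (B v v : ℝ) := by
        rw [hcompat v w, hcompat v v, hwe]
        simp only [Pi.smul_apply, smul_eq_mul]
        have hsum : ∑ i : Fin n, ι v i.succ * ((β⁻¹ * -α) * ι v i.succ)
            = (β⁻¹ * -α) * ∑ i : Fin n, ι v i.succ * ι v i.succ := by
          rw [Finset.mul_sum]; exact Finset.sum_congr rfl (fun i _ => by ring)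
        rw [hsum]; ring
      rw [hviso] at hcast
      exact_mod_cast (by simpa using hcast : (B v w : ℝ) = 0)
    subst hβ
    rw [zero_smul, add_zero] at hrel
    rcases smul_eq_zero.mp hrel with h | h
    · exact ⟨h, rfl, rfl⟩
    · exact absurd h hιv
  -- integral linear independence
  have hind : ∀ A C D : ℤ, A • v + C • w + D • x = 0 → A = 0 ∧ C = 0 ∧ D = 0 := by
    intro A C D h
    have h' : (A:ℝ) • ι v + (C:ℝ) • ι w + (D:ℝ) • ι x = 0 := by
      have h2 := congrArg ι h
      rw [map_add, map_add, map_zsmul, map_zsmul, map_zsmul, map_zero] at h2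
      rw [Int.cast_smul_eq_zsmul ℝ, Int.cast_smul_eq_zsmul ℝ, Int.cast_smul_eq_zsmul ℝ]
      exact h2
    obtain ⟨h1, h2, h3⟩ := hindR _ _ _ h'
    exact ⟨by exact_mod_cast h1, by exact_mod_cast h2, by exact_mod_cast h3⟩
  -- the family of isotropic vectors
  set zz : ℤ → L := fun k =>
    (-(B w w + 2*k*(B w x) + k^2*(B x x))) • v
      + (2*(B v w + k*(B v x))) • w + (2*k*(B v w + k*(B v x))) • x with hzz
  have hziso : ∀ k : ℤ, B (zz k) (zz k) = 0 := by
    intro k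
    simp only [hzz, map_add, map_zsmul, LinearMap.add_apply, LinearMap.smul_apply,
      smul_eq_mul, zsmul_eq_mul, Int.cast_id]
    rw [hsymm w v, hsymm x v, hsymm x w, hviso]
    ring
  have hznz : ∀ k : ℤ, B v w + k * B v x ≠ 0 → zz k ≠ 0 := by
    intro k hk h0
    obtain ⟨_, h2, _⟩ := hind _ _ _ h0
    exact hk ((mul_eq_zero.mp h2).resolve_left (by norm_num))
  -- expansion of integral combinations
  have hcomb : ∀ s t k k' : ℤ, s • zz k - t • zz k' =
      (s * (-(B w w + 2*k*(B w x) + k^2*(B x x)))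
        - t * (-(B w w + 2*k'*(B w x) + k'^2*(B x x)))) • v
      + (s * (2*(B v w + k*(B v x))) - t * (2*(B v w + k'*(B v x)))) • w
      + (s * (2*k*(B v w + k*(B v x))) - t * (2*k'*(B v w + k'*(B v x)))) • x := by
    intro s t k k'
    simp only [hzz, ← Int.cast_smul_eq_zsmul ℤ, Int.cast_id]
    module
  -- key injectivity lemma
  have hkey : ∀ k k' dk dk' m : ℤ, B v w + k * B v x ≠ 0 → B v w + k' * B v x ≠ 0 →
      dk' ≠ 0 → dk' • zz k = (dk * m) • zz k' → k = k' := by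
    intro k k' dk dk' m hk hk' hdk' hEq
    have h0 : dk' • zz k - (dk * m) • zz k' = 0 := sub_eq_zero.mpr hEq
    rw [hcomb] at h0
    obtain ⟨h1, h2, h3⟩ := hind _ _ _ h0
    have ht : dk' * (2*(B v w + k*(B v x))) ≠ 0 :=
      mul_ne_zero hdk' (mul_ne_zero (by norm_num) hk)
    have ht0 : (dk' * (2*(B v w + k*(B v x)))) * (k' - k) = 0 := by
      linear_combination k' * h2 - h3
    have := (mul_eq_zero.mp ht0).resolve_left ht
    omega
  -- the infinite parameter set
  have hSfin : {k : ℤ | B v w + k * B v x = 0}.Finite := by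
    apply Set.Subsingleton.finite
    intro k1 h1 k2 h2
    simp only [Set.mem_setOf_eq] at h1 h2
    by_cases hA : B v x = 0
    · exfalso; rw [hA, mul_zero, add_zero] at h1; exact hb h1
    · have h3 : (k1 - k2) * B v x = 0 := by linear_combination h1 - h2
      have := (mul_eq_zero.mp h3).resolve_right hA
      omega
  set S : Set ℤ := {k : ℤ | B v w + k * B v x = 0}ᶜ with hS
  have hSinf : S.Infinite := hSfin.infinite_compl
  haveI : Infinite S := hSinf.to_subtype
  have hSmem : ∀ k : S, B v w + (k : ℤ) * B v x ≠ 0 := fun k => k.2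
  -- primitive parts
  have hch : ∀ k : S, ∃ p : L, ∃ dd : ℤ, dd ≠ 0 ∧ zz k = dd • p ∧
      ∀ (w' : L) (m : ℤ), p = m • w' → IsUnit m :=
    fun k => exists_primitive_part L (zz k) (hznz k (hSmem k))
  choose P D hD hzP hPrim using hch
  have hPnz : ∀ k : S, P k ≠ 0 := by
    intro k h
    have hz0 : zz (k : ℤ) = 0 := by rw [hzP k, h]; exact zsmul_zero (D k)
    exact hznz k (hSmem k) hz0
  have hPiso : ∀ k : S, B (P k) (P k) = 0 := by
    intro k
    have h0 := hziso k
    rw [hzP k] at h0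
    rw [map_zsmul (B (D k • P k)) (D k) (P k), hsymm (D k • P k) (P k),
      map_zsmul (B (P k)) (D k) (P k), hsymm (P k)] at h0
    simp only [smul_eq_mul, zsmul_eq_mul, Int.cast_id] at h0
    rcases mul_eq_zero.mp h0 with h | h
    · exact absurd h (hD k)
    · rcases mul_eq_zero.mp h with h' | h'
      · exact absurd h' (hD k)
      · exact h'
  have hinj2 : ∀ k k' : S, (∃ m : ℤ, P k = m • P k') → k = k' := by
    rintro k k' ⟨m, hm⟩
    apply Subtype.ext
    apply hkey k k' (D k) (D k') m (hSmem k) (hSmem k') (hD k')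
    rw [hzP k, hzP k', hm]
    rw [← mul_zsmul, ← mul_zsmul, ← mul_zsmul]
    congr 1
    ring
  constructor
  · refine Set.infinite_of_injective_forall_mem (f := P) ?_ ?_
    · intro k k' h
      exact hinj2 k k' ⟨1, by rw [h]; exact (one_zsmul _).symm⟩
    · intro k
      exact ⟨hPiso k, hPrim k⟩
  · refine Set.infinite_of_injective_forall_mem
      (f := fun k : S => Submodule.span ℤ {P k}) ?_ ?_
    · intro k k' h
      simp only at h
      have hmem : P k ∈ Submodule.span ℤ {P k'} := by
        rw [← h]; exact Submodule.subset_span rfl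
      obtain ⟨m, hm⟩ := Submodule.mem_span_singleton.mp hmem
      refine hinj2 k k' ⟨m, ?_⟩
      rw [← hm, ← Int.cast_smul_eq_zsmul ℤ, Int.cast_id]
    · intro k
      exact ⟨P k, hPnz k, hPiso k, rfl⟩
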